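/- Let n ≥ 1. Let Ω = {C ∈ 𝒢_(n)(ℝ) : D_I(C) ≠ 0 for every subset I ⊆ {0,…,n} with |I| ≥ 2}. Then the set 𝒞_{Λ^n} = {C ∈ 𝒢_(n)(ℝ) : c_{jk} > 1 for all j ≠ k, and (−1)^{|I|} D_I(C) < 0 for every I ⊆ {0,…,n} with |I| ≥ 2} is a nonempty connected component of Ω. -/

import Mathlib

/-- The principal minor `D_I(C)` of a matrix `C` on the rows and columns with
indices in the subset `I ⊆ {0, …, n}`. -/
noncomputable def principalMinor (n : ℕ) (I : Finset (Fin (n + 1)))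
    (C : Matrix (Fin (n + 1)) (Fin (n + 1)) ℝ) : ℝ :=
  (C.submatrix (fun i : I => (i : Fin (n + 1))) (fun i : I => (i : Fin (n + 1)))).det

/-- The set `Ω` of real symmetric matrices with unit diagonal all of whose
principal minors of size `≥ 2` are nonzero. -/
def nondegenerateGram (n : ℕ) : Set (Matrix (Fin (n + 1)) (Fin (n + 1)) ℝ) :=
  {C | C.IsSymm ∧ (∀ j, C j j = 1) ∧
    ∀ I : Finset (Fin (n + 1)), 2 ≤ I.card → principalMinor n I C ≠ 0}

/-- The set `𝒞_{Λ^n}`: real symmetric matrices with unit diagonal such that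
`c_{jk} > 1` for all `j ≠ k` and `(-1)^{|I|} D_I(C) < 0` for every `I` with
`|I| ≥ 2`. -/
def lobachevskyGram (n : ℕ) : Set (Matrix (Fin (n + 1)) (Fin (n + 1)) ℝ) :=
  {C | C.IsSymm ∧ (∀ j, C j j = 1) ∧ (∀ j k, j ≠ k → 1 < C j k) ∧
    ∀ I : Finset (Fin (n + 1)), 2 ≤ I.card →
      (-1 : ℝ) ^ I.card * principalMinor n I C < 0}

namespace LGaux
open Matrix

noncomputable section

/-- Minkowski inner product on `ℝ^{1,n}` (coordinates indexed by `Fin (n+1)`). -/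
def mink {n : ℕ} (x y : Fin (n + 1) → ℝ) : ℝ :=
  x 0 * y 0 - ∑ i : Fin n, x i.succ * y i.succ

lemma mink_comm {n : ℕ} (x y : Fin (n + 1) → ℝ) : mink x y = mink y x := by
  unfold mink; congr 1; · ring
  · exact Finset.sum_congr rfl fun i _ => by ring

/-- Schur complement w.r.t. the (0,0) entry. -/
def schur {m : ℕ} (M : Matrix (Fin (m + 1)) (Fin (m + 1)) ℝ) : Matrix (Fin m) (Fin m) ℝ :=
  Matrix.of fun i j => M i.succ j.succ - M i.succ 0 * M 0 j.succ / M 0 0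

lemma det_schur {m : ℕ} (M : Matrix (Fin (m + 1)) (Fin (m + 1)) ℝ) (h : M 0 0 ≠ 0) :
    M.det = M 0 0 * (schur M).det := by
  classical
  set L : Matrix (Fin (m + 1)) (Fin (m + 1)) ℝ :=
    Matrix.of fun i j => if j = 0 then (if i = 0 then 1 else -(M i 0) / M 0 0) else
      (if i = j then 1 else 0) with hL
  set R : Matrix (Fin (m + 1)) (Fin (m + 1)) ℝ :=
    Matrix.of fun i j => if i = 0 then (if j = 0 then 1 else -(M 0 j) / M 0 0) else
      (if i = j then 1 else 0) with hR
  have hLdet : L.det = 1 := by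
    rw [Matrix.det_of_lowerTriangular]
    · have : ∀ i : Fin (m + 1), L i i = 1 := by
        intro i
        by_cases hi : i = 0 <;> simp [hL, hi]
      simp [this]
    · intro i j hij
      have hij' : i < j := hij
      have h1 : j ≠ 0 := (lt_of_le_of_lt (Fin.zero_le i) hij').ne'
      have h2 : i ≠ j := ne_of_lt hij'
      simp [hL, h1, h2]
  have hRdet : R.det = 1 := by
    rw [Matrix.det_of_upperTriangular]
    · have : ∀ i : Fin (m + 1), R i i = 1 := by
        intro i
        by_cases hi : i = 0 <;> simp [hR, hi]
      simp [this]
    · intro i j hij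
      have hij' : (j : Fin (m+1)) < i := hij
      have h1 : i ≠ 0 := (lt_of_le_of_lt (Fin.zero_le j) hij').ne'
      have h2 : i ≠ j := ne_of_gt hij'
      simp [hR, h1, h2]
  set G : Matrix (Fin (m + 1)) (Fin (m + 1)) ℝ := L * M * R with hG
  have hLM : ∀ i j, (L * M) i j = if i = 0 then M 0 j else M i j - M i 0 * M 0 j / M 0 0 := by
    intro i j
    rw [Matrix.mul_apply, Fin.sum_univ_succ]
    by_cases hi : i = 0
    · subst hi
      have hz : ∀ k : Fin m, L 0 k.succ * M k.succ j = 0 := by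
        intro k
        have : (0 : Fin (m+1)) ≠ k.succ := (Fin.succ_ne_zero k).symm
        simp [hL, this, Fin.succ_ne_zero]
      rw [Finset.sum_congr rfl fun k _ => hz k]
      simp [hL]
    · have hstep : ∀ k : Fin m, L i k.succ * M k.succ j
          = if i = k.succ then M k.succ j else 0 := by
        intro k
        by_cases hik : i = k.succ <;> simp [hL, hik, Fin.succ_ne_zero]
      rw [Finset.sum_congr rfl fun k _ => hstep k]
      rcases Fin.eq_zero_or_eq_succ i with h' | ⟨i', rfl⟩
      · exact absurd h' hi
      rw [Finset.sum_eq_single i']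
      · simp [hL, hi]
        ring
      · intro k _ hk
        have : ¬ i'.succ = k.succ := by simpa [Fin.succ_inj, eq_comm] using hk
        simp [this]
      · intro hk; exact absurd (Finset.mem_univ i') hk
  have hGentry : ∀ i j, G i j = if i = 0 then (if j = 0 then M 0 0 else 0)
      else (if j = 0 then 0 else M i j - M i 0 * M 0 j / M 0 0) := by
    intro i j
    rw [hG, Matrix.mul_apply, Fin.sum_univ_succ]
    by_cases hj : j = 0
    · subst hj
      have hz : ∀ k : Fin m, (L * M) i k.succ * R k.succ 0 = 0 := by
        intro k; simp [hR, Fin.succ_ne_zero]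
      rw [Finset.sum_congr rfl fun k _ => hz k]
      rw [hLM]
      by_cases hi : i = 0
      · simp [hR, hi]
      · have hRz : R 0 0 = (1 : ℝ) := by simp [hR]
        rw [if_neg hi, hRz, mul_one, Finset.sum_const_zero, add_zero, if_neg hi, if_pos rfl]
        field_simp
        ring
    · rcases Fin.eq_zero_or_eq_succ j with h' | ⟨j', rfl⟩
      · exact absurd h' hj
      have hstep : ∀ k : Fin m, (L * M) i k.succ * R k.succ j'.succ
          = if k = j' then (L * M) i k.succ else 0 := by
        intro k
        by_cases hkj : k = j'
        · subst hkj; simp [hR, Fin.succ_ne_zero]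
        · have : ¬ k.succ = j'.succ := by simpa [Fin.succ_inj] using hkj
          simp [hR, Fin.succ_ne_zero, this, hkj]
      rw [Finset.sum_congr rfl fun k _ => hstep k]
      rw [Finset.sum_ite_eq' Finset.univ j' (fun k => (L * M) i k.succ)]
      simp only [Finset.mem_univ, if_pos]
      have hR0 : R 0 j'.succ = -(M 0 j'.succ) / M 0 0 := by
        simp [hR, Fin.succ_ne_zero]
      by_cases hi : i = 0
      · subst hi
        rw [hLM, hLM, if_pos rfl, if_pos rfl, hR0, if_pos rfl, if_neg (Fin.succ_ne_zero j')]
        field_simp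
        ring
      · rw [hLM, hLM, if_neg hi, if_neg hi, hR0, if_neg hi, if_neg (Fin.succ_ne_zero j')]
        field_simp
        ring
  have hGdet : G.det = M.det := by
    rw [hG, Matrix.det_mul, Matrix.det_mul, hLdet, hRdet, one_mul, mul_one]
  have hexp : G.det = M 0 0 * (schur M).det := by
    rw [Matrix.det_succ_row_zero]
    rw [Finset.sum_eq_single 0]
    · have h00 : G 0 0 = M 0 0 := by simp [hGentry]
      have hsub : (G.submatrix Fin.succ (Fin.succAbove 0)) = schur M := by
        ext i j
        simp [Matrix.submatrix_apply, hGentry, Fin.succ_ne_zero, schur]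
      rw [hsub, h00]
      simp
    · intro j _ hj
      have : G 0 j = 0 := by simp [hGentry, hj]
      simp [this]
    · intro hk; exact absurd (Finset.mem_univ 0) hk
  rw [← hGdet, hexp]

variable {n : ℕ}

lemma mink_add_left (x y z : Fin (n + 1) → ℝ) : mink (x + y) z = mink x z + mink y z := by
  unfold mink
  simp only [Pi.add_apply, add_mul]
  rw [Finset.sum_add_distrib]
  ring

lemma mink_smul_left (c : ℝ) (x z : Fin (n + 1) → ℝ) : mink (c • x) z = c * mink x z := by
  unfold mink
  simp only [Pi.smul_apply, smul_eq_mul, mul_assoc]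
  rw [← Finset.mul_sum]
  ring

lemma mink_sub_left (x y z : Fin (n + 1) → ℝ) : mink (x - y) z = mink x z - mink y z := by
  unfold mink
  simp only [Pi.sub_apply, sub_mul]
  rw [Finset.sum_sub_distrib]
  ring

lemma mink_add_right (x y z : Fin (n + 1) → ℝ) : mink z (x + y) = mink z x + mink z y := by
  rw [mink_comm, mink_add_left, mink_comm x z, mink_comm y z]

lemma mink_smul_right (c : ℝ) (x z : Fin (n + 1) → ℝ) : mink z (c • x) = c * mink z x := by
  rw [mink_comm, mink_smul_left, mink_comm x z]

lemma mink_sub_right (x y z : Fin (n + 1) → ℝ) : mink z (x - y) = mink z x - mink z y := by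
  rw [mink_comm, mink_sub_left, mink_comm x z, mink_comm y z]

lemma mink_sum_left {ι : Type*} (s : Finset ι) (f : ι → Fin (n + 1) → ℝ)
    (z : Fin (n + 1) → ℝ) : mink (∑ i ∈ s, f i) z = ∑ i ∈ s, mink (f i) z := by
  classical
  induction s using Finset.cons_induction with
  | empty => unfold mink; simp
  | cons a s ha ih =>
    rw [Finset.sum_cons, Finset.sum_cons, mink_add_left, ih]

lemma mink_sum_right {ι : Type*} (s : Finset ι) (f : ι → Fin (n + 1) → ℝ)
    (z : Fin (n + 1) → ℝ) : mink z (∑ i ∈ s, f i) = ∑ i ∈ s, mink z (f i) := by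
  rw [mink_comm, mink_sum_left]
  exact Finset.sum_congr rfl fun i _ => mink_comm _ _

/-- A vector Minkowski-orthogonal to a timelike vector is spacelike. -/
lemma mink_self_neg (p u : Fin (n + 1) → ℝ) (hp : 0 < mink p p)
    (hpu : mink p u = 0) (hu : u ≠ 0) : mink u u < 0 := by
  set a := ∑ i : Fin n, p i.succ * p i.succ with ha
  set b := ∑ i : Fin n, u i.succ * u i.succ with hb
  set c := ∑ i : Fin n, p i.succ * u i.succ with hc
  have hA : a < p 0 * p 0 := by
    have : mink p p = p 0 * p 0 - a := rfl
    nlinarith [hp, this]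
  have hC : p 0 * u 0 = c := by
    have : mink p u = p 0 * u 0 - c := rfl
    nlinarith [hpu, this]
  have hCS : c ^ 2 ≤ a * b := by
    have := Finset.sum_mul_sq_le_sq_mul_sq Finset.univ (fun i : Fin n => p i.succ)
      (fun i : Fin n => u i.succ)
    simpa [ha, hb, hc, sq] using this
  have ha0 : 0 ≤ a := Finset.sum_nonneg fun i _ => mul_self_nonneg _
  have hb0 : 0 ≤ b := Finset.sum_nonneg fun i _ => mul_self_nonneg _
  have hmu : mink u u = u 0 * u 0 - b := rfl
  by_cases hbz : b = 0
  · -- spatial part of u vanishes, hence u = 0, contradiction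
    exfalso
    have hz : ∀ i : Fin n, u i.succ = 0 := by
      intro i
      have hnn : ∀ i ∈ Finset.univ, 0 ≤ u (Fin.succ i) * u (Fin.succ i) :=
        fun i _ => mul_self_nonneg _
      have hsz : ∑ i : Fin n, u i.succ * u i.succ = 0 := by rw [← hb]; exact hbz
      have h0 := (Finset.sum_eq_zero_iff_of_nonneg hnn).1 hsz i (Finset.mem_univ i)
      exact mul_self_eq_zero.1 h0
    have hc0 : c = 0 := by
      rw [hc]
      exact Finset.sum_eq_zero fun i _ => by rw [hz i, mul_zero]
    have hp0 : p 0 ≠ 0 := by nlinarith [hA, ha0]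
    have hu0 : u 0 = 0 := by
      have := hC
      rw [hc0] at this
      exact (mul_eq_zero.1 this).resolve_left hp0
    apply hu
    funext i
    induction i using Fin.cases with
    | zero => exact hu0
    | succ i' => exact hz i'
  · have hbpos : 0 < b := lt_of_le_of_ne hb0 (Ne.symm hbz)
    have hp2 : 0 < p 0 * p 0 := lt_of_le_of_lt ha0 hA
    have h1 : a * b < (p 0 * p 0) * b := mul_lt_mul_of_pos_right hA hbpos
    have h2 : (p 0 * u 0) ^ 2 < (p 0 * p 0) * b := by
      rw [hC]; exact lt_of_le_of_lt hCS h1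
    have h3 : u 0 * u 0 < b := by nlinarith [hp2, h2]
    rw [hmu]; linarith

/-- Key sign lemma: the Gram determinant of independent vectors, the first of which is
unit timelike, has sign `(-1)^m` for `m+1` vectors. -/
lemma sign_lemma {m : ℕ} (v : Fin (m + 1) → Fin (n + 1) → ℝ)
    (hunit : mink (v 0) (v 0) = 1)
    (hind : ∀ x : Fin (m + 1) → ℝ, (∑ j, x j • v j) = 0 → x = 0) :
    (-1 : ℝ) ^ (m + 1) * (Matrix.of fun j k => mink (v j) (v k)).det < 0 := by
  classical
  set G : Matrix (Fin (m + 1)) (Fin (m + 1)) ℝ :=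
    Matrix.of fun j k => mink (v j) (v k) with hGdef
  have hG00 : G 0 0 = 1 := hunit
  set d : Fin m → ℝ := fun i => mink (v 0) (v i.succ) with hd
  set w : Fin m → Fin (n + 1) → ℝ := fun i => v i.succ - d i • v 0 with hw
  set S : Matrix (Fin m) (Fin m) ℝ := Matrix.of fun i j => mink (w i) (w j) with hS
  have hSw : schur G = S := by
    ext i j
    have h1 : G i.succ 0 = d i := mink_comm _ _
    have h2 : G 0 j.succ = d j := rfl
    simp only [schur, Matrix.of_apply, hG00, h1, h2, div_one, hS]
    rw [hw]
    simp only
    rw [mink_sub_left, mink_sub_right, mink_sub_right, mink_smul_left, mink_smul_right,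
      mink_smul_right, mink_smul_left, hunit]
    have h3 : mink (v i.succ) (v 0) = d i := mink_comm _ _
    rw [h3]
    simp only [hGdef, Matrix.of_apply]
    ring
  -- orthogonality of w to v 0
  have hw0 : ∀ i, mink (v 0) (w i) = 0 := by
    intro i
    rw [hw]
    simp only
    rw [mink_sub_right, mink_smul_right, hunit]
    simp [hd]
  -- nontrivial combinations of w are nonzero
  have hwne : ∀ x : Fin m → ℝ, x ≠ 0 → (∑ i, x i • w i) ≠ 0 := by
    intro x hx hsum
    set z : Fin (m + 1) → ℝ := Fin.cons (-∑ i, x i * d i) x with hz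
    have hzv : ∑ j, z j • v j = ∑ i, x i • w i := by
      rw [Fin.sum_univ_succ]
      have hz0 : z 0 = -∑ i, x i * d i := rfl
      have hzs : ∀ i : Fin m, z i.succ = x i := fun i => rfl
      simp only [hz0, hzs]
      have : ∀ i : Fin m, x i • w i = x i • v i.succ - (x i * d i) • v 0 := by
        intro i
        rw [hw]
        simp only
        rw [smul_sub, smul_smul]
      rw [Finset.sum_congr rfl fun i _ => this i, Finset.sum_sub_distrib,
        ← Finset.sum_smul, neg_smul]
      abel
    have hz0' : z = 0 := hind z (by rw [hzv, hsum])
    apply hx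
    funext i
    have := congrFun hz0' i.succ
    simpa [hz] using this
  -- -S is positive definite
  have hposdef : (-S).PosDef := by
    rw [Matrix.posDef_iff_dotProduct_mulVec]
    constructor
    · unfold Matrix.IsHermitian
      ext i j
      simp only [Matrix.conjTranspose_apply, Matrix.neg_apply, hS, Matrix.of_apply, star_trivial]
      rw [mink_comm]
    · intro x hx
      have hmink : mink (∑ i, x i • w i) (∑ i, x i • w i)
          = ∑ i, ∑ j, x i * (x j * mink (w i) (w j)) := by
        rw [mink_sum_left]
        refine Finset.sum_congr rfl fun i _ => ?_
        rw [mink_smul_left, mink_sum_right, Finset.mul_sum]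
        refine Finset.sum_congr rfl fun j _ => ?_
        rw [mink_smul_right]
      have hquad : (star x) ⬝ᵥ ((-S) *ᵥ x) = -mink (∑ i, x i • w i) (∑ i, x i • w i) := by
        unfold dotProduct Matrix.mulVec dotProduct
        simp only [star_trivial, Matrix.neg_apply, hS, Matrix.of_apply]
        rw [hmink, ← Finset.sum_neg_distrib]
        refine Finset.sum_congr rfl fun i _ => ?_
        rw [Finset.mul_sum, ← Finset.sum_neg_distrib]
        refine Finset.sum_congr rfl fun j _ => ?_
        ring
      have hne := hwne x hx
      have hneg := mink_self_neg (v 0) (∑ i, x i • w i) (by rw [hunit]; norm_num)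
        (by rw [mink_sum_right]
            rw [Finset.sum_congr rfl fun i (_ : i ∈ Finset.univ) =>
              (mink_smul_right (x i) (w i) _)]
            exact Finset.sum_eq_zero fun i _ => by rw [hw0 i, mul_zero]) hne
      rw [hquad]
      linarith
  have hdetneg : 0 < (-S).det := hposdef.det_pos
  have hdetG : G.det = S.det := by
    rw [det_schur G (by rw [hG00]; norm_num), hG00, one_mul, hSw]
  have hdetS : (-S).det = (-1 : ℝ) ^ m * S.det := by
    rw [Matrix.det_neg]
    simp
  rw [hdetG]
  have hm : ((-1 : ℝ)) ^ (m + 1) * S.det = -(-S).det := by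
    rw [hdetS]
    have hmm : ((-1 : ℝ)) ^ m * ((-1 : ℝ)) ^ m = 1 := by
      rw [← pow_add, ← two_mul]
      exact Even.neg_one_pow ⟨m, by ring⟩
    rw [pow_succ]
    nlinarith [hmm]
  rw [hm]
  linarith

/-- Cholesky decomposition from positivity of leading principal minors. -/
lemma chol (m : ℕ) (A : Matrix (Fin m) (Fin m) ℝ) (hsym : ∀ i j, A i j = A j i)
    (hmin : ∀ (k : ℕ) (hk : k ≤ m), 0 < (A.submatrix (Fin.castLE hk) (Fin.castLE hk)).det) :
    ∃ Y : Matrix (Fin m) (Fin m) ℝ,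
      (∀ i j : Fin m, (j : ℕ) < (i : ℕ) → Y i j = 0) ∧ (∀ i, 0 < Y i i) ∧ Yᵀ * Y = A := by
  induction m with
  | zero =>
      refine ⟨0, fun i => i.elim0, fun i => i.elim0, ?_⟩
      ext i j; exact i.elim0
  | succ m ih =>
      have hα : 0 < A 0 0 := by
        have h1 : (1 : ℕ) ≤ m + 1 := by omega
        have := hmin 1 h1
        rw [Matrix.det_fin_one] at this
        simpa using this
      set B : Matrix (Fin m) (Fin m) ℝ := schur A with hB
      have hBsym : ∀ i j, B i j = B j i := by
        intro i j
        simp only [hB, schur, Matrix.of_apply]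
        rw [hsym i.succ j.succ, hsym i.succ 0, hsym 0 j.succ]
        ring
      have hBmin : ∀ (k : ℕ) (hk : k ≤ m), 0 <
          ((B.submatrix (Fin.castLE hk) (Fin.castLE hk)).det) := by
        intro k hk
        have hk' : k + 1 ≤ m + 1 := by omega
        set A' : Matrix (Fin (k+1)) (Fin (k+1)) ℝ :=
          A.submatrix (Fin.castLE hk') (Fin.castLE hk') with hA'
        have hcast0 : Fin.castLE hk' (0 : Fin (k+1)) = 0 := rfl
        have hcastsucc : ∀ i : Fin k, Fin.castLE hk' i.succ = (Fin.castLE hk i).succ := by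
          intro i; apply Fin.ext; simp
        have hsubeq : B.submatrix (Fin.castLE hk) (Fin.castLE hk) = schur A' := by
          ext i j
          simp only [Matrix.submatrix_apply, hB, hA', schur, Matrix.of_apply, hcast0,
            hcastsucc]
        have hdet := det_schur A' (by
          have : A' 0 0 = A 0 0 := by simp [hA', hcast0]
          rw [this]; exact hα.ne')
        have hApos := hmin (k+1) hk'
        rw [hsubeq]
        have hA00 : A' 0 0 = A 0 0 := by simp [hA', hcast0]
        rw [hdet, hA00] at hApos
        nlinarith [hApos, hα]
      obtain ⟨Y', hY'tri, hY'diag, hY'sq⟩ := ih B hBsym hBmin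
      set s := Real.sqrt (A 0 0) with hs
      have hspos : 0 < s := Real.sqrt_pos.2 hα
      have hss : s * s = A 0 0 := Real.mul_self_sqrt hα.le
      set Y : Matrix (Fin (m+1)) (Fin (m+1)) ℝ :=
        Matrix.of (Fin.cons (Fin.cons s (fun j' => A 0 j'.succ / s))
          (fun i' => Fin.cons 0 (fun j' => Y' i' j'))) with hY
      have hY00 : Y 0 0 = s := rfl
      have hY0s : ∀ j' : Fin m, Y 0 j'.succ = A 0 j'.succ / s := fun _ => rfl
      have hYs0 : ∀ i' : Fin m, Y i'.succ 0 = 0 := fun _ => rfl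
      have hYss : ∀ i' j' : Fin m, Y i'.succ j'.succ = Y' i' j' := fun _ _ => rfl
      refine ⟨Y, ?_, ?_, ?_⟩
      · intro i j hij
        induction i using Fin.cases with
        | zero =>
            simp only [Fin.val_zero] at hij
            omega
        | succ i' =>
          induction j using Fin.cases with
          | zero => exact hYs0 i'
          | succ j' =>
            rw [hYss]
            exact hY'tri i' j' (by simpa using hij)
      · intro i
        induction i using Fin.cases with
        | zero => exact hspos
        | succ i' => rw [hYss]; exact hY'diag i'
      · ext i j
        rw [Matrix.mul_apply, Fin.sum_univ_succ]
        simp only [Matrix.transpose_apply]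
        induction i using Fin.cases with
        | zero =>
          induction j using Fin.cases with
          | zero =>
            rw [hY00]
            simp only [hYs0]
            simp [hss]
          | succ j' =>
            rw [hY00, hY0s]
            simp only [hYs0]
            field_simp
            simp
        | succ i' =>
          induction j using Fin.cases with
          | zero =>
            rw [hY00, hY0s]
            simp only [hYs0]
            rw [hsym 0 i'.succ]
            field_simp
            simp
          | succ j' =>
            rw [hY0s, hY0s]
            simp only [hYss]
            have hsum : ∑ k' : Fin m, Y' k' i' * Y' k' j' = B i' j' := by
              rw [← hY'sq]
              rw [Matrix.mul_apply]
              simp [Matrix.transpose_apply]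
            rw [hsum]
            simp only [hB, schur, Matrix.of_apply]
            rw [hsym i'.succ 0, div_mul_div_comm, hss]
            ring
  
variable (n : ℕ)

/-- Spatial part of the `j`-th vertex vector, from the triangular parameter matrix `Y`. -/
def spat (Y : Matrix (Fin n) (Fin n) ℝ) (j : Fin (n + 1)) : Fin n → ℝ :=
  Fin.cases (fun _ => 0) (fun j' => fun i => Y i j') j

/-- Time coordinate putting the vertex on the upper hyperboloid. -/
def tc (Y : Matrix (Fin n) (Fin n) ℝ) (j : Fin (n + 1)) : ℝ :=
  Real.sqrt (1 + ∑ i, spat n Y j i * spat n Y j i)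

/-- The `j`-th vertex vector in `ℝ^{1,n}`. -/
def vvec (Y : Matrix (Fin n) (Fin n) ℝ) (j : Fin (n + 1)) : Fin (n + 1) → ℝ :=
  Fin.cons (tc n Y j) (spat n Y j)

/-- The Gram matrix of the configuration. -/
def gram (Y : Matrix (Fin n) (Fin n) ℝ) : Matrix (Fin (n + 1)) (Fin (n + 1)) ℝ :=
  Matrix.of fun j k => mink (vvec n Y j) (vvec n Y k)

/-- The (convex) parameter space: upper triangular with positive diagonal. -/
def Pspace : Set (Matrix (Fin n) (Fin n) ℝ) :=
  {Y | (∀ i j : Fin n, (j : ℕ) < (i : ℕ) → Y i j = 0) ∧ ∀ i, 0 < Y i i}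

variable {n}

lemma gram_apply (Y : Matrix (Fin n) (Fin n) ℝ) (j k : Fin (n + 1)) :
    gram n Y j k = tc n Y j * tc n Y k - ∑ i, spat n Y j i * spat n Y k i := by
  simp [gram, mink, vvec]

lemma spat_zero (Y : Matrix (Fin n) (Fin n) ℝ) : spat n Y 0 = fun _ => 0 := rfl

lemma spat_succ (Y : Matrix (Fin n) (Fin n) ℝ) (j' : Fin n) :
    spat n Y j'.succ = fun i => Y i j' := rfl

lemma sum_spat_sq_nonneg (Y : Matrix (Fin n) (Fin n) ℝ) (j : Fin (n + 1)) :
    0 ≤ ∑ i, spat n Y j i * spat n Y j i :=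
  Finset.sum_nonneg fun i _ => mul_self_nonneg _

lemma tc_mul_self (Y : Matrix (Fin n) (Fin n) ℝ) (j : Fin (n + 1)) :
    tc n Y j * tc n Y j = 1 + ∑ i, spat n Y j i * spat n Y j i :=
  Real.mul_self_sqrt (by linarith [sum_spat_sq_nonneg Y j])

lemma gram_diag (Y : Matrix (Fin n) (Fin n) ℝ) (j : Fin (n + 1)) : gram n Y j j = 1 := by
  rw [gram_apply, tc_mul_self]; ring

lemma mink_vvec_self (Y : Matrix (Fin n) (Fin n) ℝ) (j : Fin (n + 1)) :
    mink (vvec n Y j) (vvec n Y j) = 1 := gram_diag Y j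

/-- Strict hyperbolic inequality: two distinct points on the upper hyperboloid have
Minkowski product `> 1`. -/
lemma hyp_gt_one (u w : Fin n → ℝ) (huw : u ≠ w) :
    1 < Real.sqrt (1 + ∑ i, u i * u i) * Real.sqrt (1 + ∑ i, w i * w i)
        - ∑ i, u i * w i := by
  set s := ∑ i, u i * u i with hs
  set t := ∑ i, w i * w i with ht
  set p := ∑ i, u i * w i with hp
  have hCS : p ^ 2 ≤ s * t := by
    have := Finset.sum_mul_sq_le_sq_mul_sq Finset.univ u w
    simpa [hs, ht, hp, sq] using this
  have hst : 0 < s + t - 2 * p := by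
    have hexp : s + t - 2 * p = ∑ i, (u i - w i) ^ 2 := by
      rw [hs, ht, hp, Finset.mul_sum]
      rw [← Finset.sum_add_distrib, ← Finset.sum_sub_distrib]
      exact Finset.sum_congr rfl fun i _ => by ring
    rw [hexp]
    have hex : ∃ i, u i ≠ w i := by
      by_contra hc
      push_neg at hc
      exact huw (funext hc)
    obtain ⟨i0, hi0⟩ := hex
    refine Finset.sum_pos' (fun i _ => sq_nonneg _) ⟨i0, Finset.mem_univ i0, ?_⟩
    have hne : u i0 - w i0 ≠ 0 := sub_ne_zero.2 hi0
    positivity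
  have hs0 : 0 ≤ s := Finset.sum_nonneg fun i _ => mul_self_nonneg _
  have ht0 : 0 ≤ t := Finset.sum_nonneg fun i _ => mul_self_nonneg _
  have hkey : (1 + p) ^ 2 < (1 + s) * (1 + t) := by nlinarith [hCS, hst]
  have h1 : Real.sqrt (1 + s) * Real.sqrt (1 + t) = Real.sqrt ((1 + s) * (1 + t)) :=
    (Real.sqrt_mul (by linarith) _).symm
  have h2 : 1 + p ≤ Real.sqrt ((1 + p) ^ 2) := by
    rw [Real.sqrt_sq_eq_abs]; exact le_abs_self _
  have h3 : Real.sqrt ((1 + p) ^ 2) < Real.sqrt ((1 + s) * (1 + t)) :=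
    Real.sqrt_lt_sqrt (sq_nonneg _) hkey
  rw [h1]
  linarith

/-- Distinct columns of the echelon configuration. -/
lemma spat_ne {Y : Matrix (Fin n) (Fin n) ℝ} (hY : Y ∈ Pspace n)
    {j k : Fin (n + 1)} (hjk : j < k) : spat n Y j ≠ spat n Y k := by
  obtain ⟨htri, hdiag⟩ := hY
  have hk0 : k ≠ 0 := by
    intro hk; subst hk; exact absurd (lt_of_le_of_lt (Fin.zero_le j) hjk) (lt_irrefl 0)
  rcases Fin.eq_zero_or_eq_succ k with hk' | ⟨k', rfl⟩
  · exact absurd hk' hk0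
  intro heq
  have hval := congrFun heq k'
  have hkk : spat n Y k'.succ k' = Y k' k' := rfl
  have hj : spat n Y j k' = 0 := by
    rcases Fin.eq_zero_or_eq_succ j with hj' | ⟨j', rfl⟩
    · subst hj'; rfl
    · have : (j' : ℕ) < (k' : ℕ) := by
        have := hjk
        simp only [Fin.lt_def, Fin.val_succ] at this
        omega
      exact htri k' j' this
  rw [hkk, hj] at hval
  exact absurd hval.symm (ne_of_gt (hdiag k'))

lemma gram_offdiag_gt_one {Y : Matrix (Fin n) (Fin n) ℝ} (hY : Y ∈ Pspace n)
    {j k : Fin (n + 1)} (hjk : j ≠ k) : 1 < gram n Y j k := by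
  have key : ∀ a b : Fin (n + 1), a < b → 1 < gram n Y a b := by
    intro a b hab
    rw [gram_apply]
    exact hyp_gt_one _ _ (spat_ne hY hab)
  rcases lt_or_gt_of_ne hjk with h | h
  · exact key j k h
  · have := key k j h
    have hcomm : gram n Y j k = gram n Y k j := mink_comm _ _
    rw [hcomm]; exact this

/-- The matrix of vertex vectors (as columns). -/
def Vmat (Y : Matrix (Fin n) (Fin n) ℝ) : Matrix (Fin (n + 1)) (Fin (n + 1)) ℝ :=
  Matrix.of fun i j => vvec n Y j i
-- note: n implicit here

lemma Vmat_det_pos {Y : Matrix (Fin n) (Fin n) ℝ} (hY : Y ∈ Pspace n) :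
    0 < (Vmat Y).det := by
  obtain ⟨htri, hdiag⟩ := hY
  have htri' : (Vmat Y).BlockTriangular id := by
    intro i j hij
    have hij' : (j : Fin (n+1)) < i := hij
    have hi0 : i ≠ 0 := (lt_of_le_of_lt (Fin.zero_le j) hij').ne'
    rcases Fin.eq_zero_or_eq_succ i with h' | ⟨i', rfl⟩
    · exact absurd h' hi0
    show vvec n Y j i'.succ = 0
    have : vvec n Y j i'.succ = spat n Y j i' := rfl
    rw [this]
    rcases Fin.eq_zero_or_eq_succ j with hj' | ⟨j', rfl⟩
    · subst hj'; rfl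
    · have : (j' : ℕ) < (i' : ℕ) := by
        have := hij'
        simp only [Fin.lt_def, Fin.val_succ] at this
        omega
      exact htri i' j' this
  rw [Matrix.det_of_upperTriangular htri']
  apply Finset.prod_pos
  intro i _
  rcases Fin.eq_zero_or_eq_succ i with rfl | ⟨i', rfl⟩
  · show 0 < vvec n Y 0 0
    have : vvec n Y 0 0 = tc n Y 0 := rfl
    rw [this]
    exact Real.sqrt_pos.2 (by linarith [sum_spat_sq_nonneg Y 0])
  · show 0 < vvec n Y i'.succ i'.succ
    have : vvec n Y i'.succ i'.succ = Y i' i' := rfl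
    rw [this]
    exact hdiag i'

lemma indep {Y : Matrix (Fin n) (Fin n) ℝ} (hY : Y ∈ Pspace n) :
    ∀ z : Fin (n + 1) → ℝ, (∑ j, z j • vvec n Y j) = 0 → z = 0 := by
  intro z hz
  have hmv : Vmat Y *ᵥ z = 0 := by
    funext i
    have : (Vmat Y *ᵥ z) i = ∑ j, z j * vvec n Y j i := by
      rw [Matrix.mulVec]
      unfold dotProduct
      exact Finset.sum_congr rfl fun j _ => by rw [mul_comm]; rfl
    rw [this]
    have := congrFun hz i
    simpa [Finset.sum_apply] using this
  have hunit : IsUnit (Vmat Y).det := (ne_of_gt (Vmat_det_pos hY)).isUnit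
  have := congrArg (fun w => (Vmat Y)⁻¹ *ᵥ w) hmv
  simpa [Matrix.mulVec_mulVec, Matrix.nonsing_inv_mul _ hunit] using this

/-- Direction (A): the Gram matrix of an echelon configuration lies in `𝒞`. -/
lemma gram_mem_lob {Y : Matrix (Fin n) (Fin n) ℝ} (hY : Y ∈ Pspace n) :
    gram n Y ∈ lobachevskyGram n := by
  refine ⟨?_, fun j => gram_diag Y j, fun j k hjk => gram_offdiag_gt_one hY hjk, ?_⟩
  · ext j k
    exact mink_comm _ _
  intro I hI
  obtain ⟨m, hm⟩ : ∃ m : ℕ, I.card = m + 1 := ⟨I.card - 1, by omega⟩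
  set σ := I.orderIsoOfFin hm with hσ
  set v' : Fin (m + 1) → Fin (n + 1) → ℝ := fun a => vvec n Y (σ a) with hv'
  have hpm : principalMinor n I (gram n Y) = (Matrix.of fun a b => mink (v' a) (v' b)).det := by
    unfold principalMinor
    rw [← Matrix.det_submatrix_equiv_self σ.toEquiv]
    congr 1
  have hsign := sign_lemma v' (mink_vvec_self Y (σ 0)) ?_
  · rw [hpm, hm]
    exact hsign
  · intro x hx
    classical
    set z : Fin (n + 1) → ℝ :=
      fun i => if h : i ∈ I then x (σ.symm ⟨i, h⟩) else 0 with hzdef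
    have hzσ : ∀ a : Fin (m + 1), z ((σ a : Fin (n+1))) = x a := by
      intro a
      rw [hzdef]
      simp only
      rw [dif_pos (σ a).2]
      congr
      simp
    have hzsum : ∑ i, z i • vvec n Y i = ∑ a, x a • v' a := by
      rw [← Finset.sum_subset (Finset.subset_univ I)
        (fun i _ hiI => by rw [hzdef]; simp [dif_neg hiI])]
      rw [← Finset.sum_coe_sort I (fun i => z i • vvec n Y i)]
      rw [← Equiv.sum_comp σ.toEquiv (fun i : I => z i • vvec n Y (i : Fin (n+1)))]
      refine Finset.sum_congr rfl fun a _ => ?_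
      have hcoe : ((σ.toEquiv a : I) : Fin (n+1)) = ((σ a : I) : Fin (n+1)) := rfl
      rw [hcoe, hzσ a]
    have hz0 : z = 0 := indep hY z (by rw [hzsum, hx])
    funext a
    have := congrFun hz0 (σ a)
    rw [hzσ a] at this
    exact this

lemma one_mem_Pspace : (1 : Matrix (Fin n) (Fin n) ℝ) ∈ Pspace n := by
  constructor
  · intro i j hij
    apply Matrix.one_apply_ne
    intro h; subst h; omega
  · intro i; simp


/-- Direction (B): every matrix in `𝒞` is the Gram matrix of an echelon configuration. -/
lemma lob_factor {C : Matrix (Fin (n + 1)) (Fin (n + 1)) ℝ} (hC : C ∈ lobachevskyGram n) :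
    ∃ Y ∈ Pspace n, gram n Y = C := by
  classical
  obtain ⟨hsym, hdiag, hoff, hmin⟩ := hC
  have hsym' : ∀ i j, C i j = C j i := fun i j => hsym.apply j i
  set M : Matrix (Fin n) (Fin n) ℝ :=
    Matrix.of fun i j => C 0 i.succ * C 0 j.succ - C i.succ j.succ with hM
  have hMsym : ∀ i j, M i j = M j i := by
    intro i j
    simp only [hM, Matrix.of_apply]
    rw [hsym' i.succ j.succ]
    ring
  have hlead : ∀ (k : ℕ) (hk : k ≤ n),
      0 < (M.submatrix (Fin.castLE hk) (Fin.castLE hk)).det := by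
    intro k hk
    rcases Nat.eq_zero_or_pos k with rfl | hkpos
    · rw [Matrix.det_fin_zero]; norm_num
    obtain ⟨k', rfl⟩ : ∃ k', k = k' + 1 := ⟨k - 1, by omega⟩
    have hk2 : k' + 2 ≤ n + 1 := by omega
    set I : Finset (Fin (n + 1)) := Finset.univ.map (Fin.castLEEmb hk2) with hI
    have hcard : I.card = k' + 2 := by simp [hI]
    set CK : Matrix (Fin (k' + 2)) (Fin (k' + 2)) ℝ :=
      C.submatrix (Fin.castLE hk2) (Fin.castLE hk2) with hCK
    have hτmem : ∀ a : Fin (k' + 2), (Fin.castLE hk2 a) ∈ I := by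
      intro a
      simp [hI, Fin.castLEEmb]
    set τ : Fin (k' + 2) ≃ {x // x ∈ I} := Equiv.ofBijective
      (fun a => ⟨Fin.castLE hk2 a, hτmem a⟩) (by
        constructor
        · intro a b hab
          have := congrArg Subtype.val hab
          exact Fin.castLE_injective hk2 this
        · rintro ⟨x, hx⟩
          rw [hI] at hx
          simp only [Finset.mem_map, Finset.mem_univ, true_and] at hx
          obtain ⟨a, ha⟩ := hx
          exact ⟨a, Subtype.ext ha⟩) with hτ
    have hpm : principalMinor n I C = CK.det := by
      unfold principalMinor
      rw [← Matrix.det_submatrix_equiv_self τ]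
      congr 1
    have hCK00 : CK 0 0 = 1 := by
      have h0 : Fin.castLE hk2 (0 : Fin (k' + 2)) = 0 := rfl
      rw [hCK]
      simp only [Matrix.submatrix_apply, h0]
      exact hdiag 0
    have hds := det_schur CK (by rw [hCK00]; norm_num)
    have hschur : schur CK = -(M.submatrix (Fin.castLE hk) (Fin.castLE hk)) := by
      ext i j
      have hsucc : ∀ i : Fin (k' + 1), Fin.castLE hk2 i.succ = (Fin.castLE hk i).succ :=
        fun i => by apply Fin.ext; simp
      have h0 : Fin.castLE hk2 (0 : Fin (k' + 2)) = 0 := rfl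
      simp only [schur, Matrix.of_apply, hCK, Matrix.submatrix_apply, hsucc, h0,
        Matrix.neg_apply, hM]
      rw [hdiag 0, div_one, hsym' (Fin.castLE hk i).succ 0]
      ring
    have hcond := hmin I (by rw [hcard]; omega)
    rw [hcard, hpm, hds, hCK00, one_mul, hschur, Matrix.det_neg] at hcond
    simp only [Fintype.card_fin] at hcond
    rw [← mul_assoc] at hcond
    have hpow : ((-1 : ℝ)) ^ (k' + 2) * ((-1 : ℝ)) ^ (k' + 1) = -1 := by
      rw [← pow_add]
      have h2 : k' + 2 + (k' + 1) = 2 * (k' + 1) + 1 := by ring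
      rw [h2, pow_succ, pow_mul]
      norm_num
    rw [hpow] at hcond
    linarith
  obtain ⟨Y, htri, hdiagY, hYY⟩ := chol n M hMsym hlead
  refine ⟨Y, ⟨htri, hdiagY⟩, ?_⟩
  have hcolsum : ∀ j' k' : Fin n,
      ∑ i, spat n Y j'.succ i * spat n Y k'.succ i = M j' k' := by
    intro j' k'
    have h1 : (Yᵀ * Y) j' k' = ∑ i, Y i j' * Y i k' := by
      rw [Matrix.mul_apply]
      exact Finset.sum_congr rfl fun i _ => by rw [Matrix.transpose_apply]
    have h2 : ∑ i, spat n Y j'.succ i * spat n Y k'.succ i = ∑ i, Y i j' * Y i k' := by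
      exact Finset.sum_congr rfl fun i _ => rfl
    rw [h2, ← h1, hYY]
  have hCpos : ∀ j' : Fin n, 0 ≤ C 0 j'.succ := by
    intro j'
    have := hoff 0 j'.succ (Fin.succ_ne_zero j').symm
    linarith
  have htc : ∀ j' : Fin n, tc n Y j'.succ = C 0 j'.succ := by
    intro j'
    unfold tc
    rw [hcolsum j' j']
    have : (1 : ℝ) + M j' j' = C 0 j'.succ * C 0 j'.succ := by
      simp only [hM, Matrix.of_apply]
      rw [hdiag j'.succ]
      ring
    rw [this]
    exact Real.sqrt_mul_self (hCpos j')
  have htc0 : tc n Y 0 = 1 := by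
    unfold tc
    have : ∀ i : Fin n, spat n Y (0 : Fin (n+1)) i * spat n Y (0 : Fin (n+1)) i = 0 := by
      intro i
      rw [spat_zero]
      simp
    rw [Finset.sum_congr rfl fun i _ => this i]
    simp
  ext j k
  rw [gram_apply]
  induction j using Fin.cases with
  | zero =>
    induction k using Fin.cases with
    | zero =>
      rw [htc0, hdiag 0]
      rw [spat_zero]
      simp
    | succ k' =>
      rw [htc0, htc k', spat_zero]
      simp
  | succ j' =>
    induction k using Fin.cases with
    | zero =>
      rw [htc0, htc j', spat_zero]
      simp
      exact (hsym' j'.succ 0).symm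
    | succ k' =>
      rw [htc j', htc k', hcolsum j' k']
      simp only [hM, Matrix.of_apply]
      ring


/-! ### Topological part -/

lemma entry_continuous (j k : Fin (n + 1)) :
    Continuous fun C : Matrix (Fin (n + 1)) (Fin (n + 1)) ℝ => C j k :=
  continuous_apply_apply j k

lemma pm_continuous (I : Finset (Fin (n + 1))) :
    Continuous fun C : Matrix (Fin (n + 1)) (Fin (n + 1)) ℝ => principalMinor n I C := by
  unfold principalMinor
  exact (Continuous.matrix_submatrix continuous_id _ _).matrix_det

def Uset (n : ℕ) : Set (Matrix (Fin (n + 1)) (Fin (n + 1)) ℝ) :=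
  {C | (∀ j k, j ≠ k → 1 < C j k) ∧
    ∀ I : Finset (Fin (n + 1)), 2 ≤ I.card → (-1 : ℝ) ^ I.card * principalMinor n I C < 0}

def Kset (n : ℕ) : Set (Matrix (Fin (n + 1)) (Fin (n + 1)) ℝ) :=
  {C | (∀ j k, j ≠ k → 1 ≤ C j k) ∧
    ∀ I : Finset (Fin (n + 1)), 2 ≤ I.card → (-1 : ℝ) ^ I.card * principalMinor n I C ≤ 0}

lemma Uset_open : IsOpen (Uset n) := by
  have h1 : Uset n = (⋂ j, ⋂ k, {C : Matrix (Fin (n + 1)) (Fin (n + 1)) ℝ |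
      j ≠ k → 1 < C j k}) ∩ ⋂ I : Finset (Fin (n + 1)),
      {C | 2 ≤ I.card → (-1 : ℝ) ^ I.card * principalMinor n I C < 0} := by
    ext C
    simp only [Uset, Set.mem_setOf_eq, Set.mem_inter_iff, Set.mem_iInter]
  rw [h1]
  apply IsOpen.inter
  · refine isOpen_iInter_of_finite fun j => isOpen_iInter_of_finite fun k => ?_
    by_cases hjk : j = k
    · have : {C : Matrix (Fin (n + 1)) (Fin (n + 1)) ℝ | j ≠ k → 1 < C j k} = Set.univ := by
        ext C; simp [hjk]
      rw [this]; exact isOpen_univ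
    · have : {C : Matrix (Fin (n + 1)) (Fin (n + 1)) ℝ | j ≠ k → 1 < C j k}
          = (fun C : Matrix (Fin (n + 1)) (Fin (n + 1)) ℝ => C j k) ⁻¹' Set.Ioi 1 := by
        ext C; simp [hjk]
      rw [this]
      exact isOpen_Ioi.preimage (entry_continuous j k)
  · refine isOpen_iInter_of_finite fun I => ?_
    by_cases hI : 2 ≤ I.card
    · have : {C : Matrix (Fin (n + 1)) (Fin (n + 1)) ℝ |
          2 ≤ I.card → (-1 : ℝ) ^ I.card * principalMinor n I C < 0}
          = (fun C => (-1 : ℝ) ^ I.card * principalMinor n I C) ⁻¹' Set.Iio 0 := by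
        ext C; simp [hI]
      rw [this]
      exact isOpen_Iio.preimage (continuous_const.mul (pm_continuous I))
    · have : {C : Matrix (Fin (n + 1)) (Fin (n + 1)) ℝ |
          2 ≤ I.card → (-1 : ℝ) ^ I.card * principalMinor n I C < 0} = Set.univ := by
        ext C; simp [hI]
      rw [this]; exact isOpen_univ

lemma Kset_closed : IsClosed (Kset n) := by
  have h1 : Kset n = (⋂ j, ⋂ k, {C : Matrix (Fin (n + 1)) (Fin (n + 1)) ℝ |
      j ≠ k → 1 ≤ C j k}) ∩ ⋂ I : Finset (Fin (n + 1)),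
      {C | 2 ≤ I.card → (-1 : ℝ) ^ I.card * principalMinor n I C ≤ 0} := by
    ext C
    simp only [Kset, Set.mem_setOf_eq, Set.mem_inter_iff, Set.mem_iInter]
  rw [h1]
  apply IsClosed.inter
  · refine isClosed_iInter fun j => isClosed_iInter fun k => ?_
    by_cases hjk : j = k
    · have : {C : Matrix (Fin (n + 1)) (Fin (n + 1)) ℝ | j ≠ k → 1 ≤ C j k} = Set.univ := by
        ext C; simp [hjk]
      rw [this]; exact isClosed_univ
    · have : {C : Matrix (Fin (n + 1)) (Fin (n + 1)) ℝ | j ≠ k → 1 ≤ C j k}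
          = (fun C : Matrix (Fin (n + 1)) (Fin (n + 1)) ℝ => C j k) ⁻¹' Set.Ici 1 := by
        ext C; simp [hjk]
      rw [this]
      exact isClosed_Ici.preimage (entry_continuous j k)
  · refine isClosed_iInter fun I => ?_
    by_cases hI : 2 ≤ I.card
    · have : {C : Matrix (Fin (n + 1)) (Fin (n + 1)) ℝ |
          2 ≤ I.card → (-1 : ℝ) ^ I.card * principalMinor n I C ≤ 0}
          = (fun C => (-1 : ℝ) ^ I.card * principalMinor n I C) ⁻¹' Set.Iic 0 := by
        ext C; simp [hI]
      rw [this]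
      exact isClosed_Iic.preimage (continuous_const.mul (pm_continuous I))
    · have : {C : Matrix (Fin (n + 1)) (Fin (n + 1)) ℝ |
          2 ≤ I.card → (-1 : ℝ) ^ I.card * principalMinor n I C ≤ 0} = Set.univ := by
        ext C; simp [hI]
      rw [this]; exact isClosed_univ

/-- Value of a 2×2 principal minor. -/
lemma pm_pair (C : Matrix (Fin (n + 1)) (Fin (n + 1)) ℝ) {j k : Fin (n + 1)} (hjk : j ≠ k) :
    principalMinor n {j, k} C = C j j * C k k - C j k * C k j := by
  classical
  have hcard : ({j, k} : Finset (Fin (n + 1))).card = 2 := Finset.card_pair hjk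
  set σ := ({j, k} : Finset (Fin (n + 1))).orderIsoOfFin hcard with hσ
  have hpm : principalMinor n {j, k} C
      = (Matrix.of fun a b : Fin 2 => C (σ a) (σ b)).det := by
    unfold principalMinor
    rw [← Matrix.det_submatrix_equiv_self σ.toEquiv]
    congr 1
  rw [hpm, Matrix.det_fin_two]
  have hne : ((σ 0 : Fin (n + 1))) ≠ ((σ 1 : Fin (n + 1))) := by
    intro h
    have : (0 : Fin 2) = 1 := σ.injective (Subtype.ext h)
    simp at this
  have hmem : ∀ a : Fin 2, ((σ a : Fin (n + 1))) = j ∨ ((σ a : Fin (n + 1))) = k := by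
    intro a
    have h := (σ a).2
    rw [Finset.mem_insert, Finset.mem_singleton] at h
    exact h
  simp only [Matrix.of_apply]
  rcases hmem 0 with h0 | h0 <;> rcases hmem 1 with h1 | h1
  · exact absurd (h0.trans h1.symm) hne
  · rw [h0, h1]
  · rw [h0, h1]; ring
  · exact absurd (h0.trans h1.symm) hne

lemma lob_subset_nd : lobachevskyGram n ⊆ nondegenerateGram n := by
  intro C hC
  obtain ⟨hsym, hdiag, _, hmin⟩ := hC
  refine ⟨hsym, hdiag, fun I hI h0 => ?_⟩
  have := hmin I hI
  rw [h0, mul_zero] at this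
  exact lt_irrefl 0 this

lemma lob_eq_nd_inter_U : lobachevskyGram n = nondegenerateGram n ∩ Uset n := by
  ext C
  constructor
  · intro hC
    refine ⟨lob_subset_nd hC, hC.2.2.1, hC.2.2.2⟩
  · rintro ⟨⟨hsym, hdiag, _⟩, hU1, hU2⟩
    exact ⟨hsym, hdiag, hU1, hU2⟩

lemma lob_eq_nd_inter_K : lobachevskyGram n = nondegenerateGram n ∩ Kset n := by
  ext C
  constructor
  · intro hC
    exact ⟨lob_subset_nd hC, fun j k hjk => (hC.2.2.1 j k hjk).le,
      fun I hI => (hC.2.2.2 I hI).le⟩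
  · rintro ⟨⟨hsym, hdiag, hne⟩, hK1, hK2⟩
    have hstrict : ∀ I : Finset (Fin (n + 1)), 2 ≤ I.card →
        (-1 : ℝ) ^ I.card * principalMinor n I C < 0 := by
      intro I hI
      rcases lt_or_eq_of_le (hK2 I hI) with h | h
      · exact h
      · exfalso
        apply hne I hI
        have hp : ((-1 : ℝ) ^ I.card) ≠ 0 := pow_ne_zero _ (by norm_num)
        rcases mul_eq_zero.1 h with h' | h'
        · exact absurd h' hp
        · exact h'
    refine ⟨hsym, hdiag, fun j k hjk => ?_, hstrict⟩
    have h2 := hstrict {j, k} (by rw [Finset.card_pair hjk])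
    rw [pm_pair C hjk, Finset.card_pair hjk] at h2
    have hsym2 : C k j = C j k := hsym.apply j k
    rw [hdiag j, hdiag k, hsym2] at h2
    have hle := hK1 j k hjk
    nlinarith [h2, hle]

/-- Convexity of the parameter space. -/
lemma Pspace_convex : Convex ℝ (Pspace n) := by
  intro Y hY Z hZ a b ha hb hab
  constructor
  · intro i j hij
    have h1 : (a • Y + b • Z) i j = a * Y i j + b * Z i j := by
      simp [Matrix.add_apply]
    rw [h1, hY.1 i j hij, hZ.1 i j hij]
    ring
  · intro i
    have h1 : (a • Y + b • Z) i i = a * Y i i + b * Z i i := by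
      simp [Matrix.add_apply]
    rw [h1]
    rcases ha.lt_or_eq with ha' | ha'
    · have : 0 ≤ b * Z i i := mul_nonneg hb (hZ.2 i).le
      nlinarith [mul_pos ha' (hY.2 i)]
    · have hb1 : b = 1 := by linarith
      rw [← ha', hb1, zero_mul, one_mul, zero_add]
      exact hZ.2 i

lemma gram_continuous : Continuous (gram n) := by
  apply continuous_matrix
  intro j k
  have hspat : ∀ (j : Fin (n + 1)) (i : Fin n),
      Continuous fun Y : Matrix (Fin n) (Fin n) ℝ => spat n Y j i := by
    intro j i
    induction j using Fin.cases with
    | zero => exact continuous_const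
    | succ j' => exact continuous_apply_apply i j'
  have htc : ∀ j : Fin (n + 1), Continuous fun Y : Matrix (Fin n) (Fin n) ℝ => tc n Y j := by
    intro j
    unfold tc
    exact Real.continuous_sqrt.comp (continuous_const.add
      (continuous_finset_sum _ fun i _ => (hspat j i).mul (hspat j i)))
  have hentry : ∀ Y : Matrix (Fin n) (Fin n) ℝ, gram n Y j k
      = tc n Y j * tc n Y k - ∑ i, spat n Y j i * spat n Y k i :=
    fun Y => gram_apply Y j k
  simp only [hentry]
  exact ((htc j).mul (htc k)).sub (continuous_finset_sum _ fun i _ => (hspat j i).mul (hspat k i))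

lemma lob_eq_image : lobachevskyGram n = gram n '' Pspace n := by
  ext C
  constructor
  · intro hC
    obtain ⟨Y, hY, hEq⟩ := lob_factor hC
    exact ⟨Y, hY, hEq⟩
  · rintro ⟨Y, hY, rfl⟩
    exact gram_mem_lob hY

lemma lob_preconnected : IsPreconnected (lobachevskyGram n) := by
  rw [lob_eq_image]
  exact (Pspace_convex.isPreconnected).image (gram n) (gram_continuous.continuousOn)

theorem main (n : ℕ) (hn : 1 ≤ n) :
    (lobachevskyGram n).Nonempty ∧
    lobachevskyGram n ⊆ nondegenerateGram n ∧
    ∀ C ∈ lobachevskyGram n,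
      connectedComponentIn (nondegenerateGram n) C = lobachevskyGram n := by
  refine ⟨⟨gram n 1, gram_mem_lob one_mem_Pspace⟩, lob_subset_nd, fun C hC => ?_⟩
  apply Set.Subset.antisymm
  · -- connected component ⊆ 𝒞, via clopen-ness in Ω
    have hCΩ : C ∈ nondegenerateGram n := lob_subset_nd hC
    rw [connectedComponentIn_eq_image hCΩ]
    set s : Set (nondegenerateGram n) := Subtype.val ⁻¹' lobachevskyGram n with hs
    have hopen : IsOpen s := by
      have : s = Subtype.val ⁻¹' Uset n := by
        ext ⟨x, hx⟩
        simp only [hs, Set.mem_preimage]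
        constructor
        · intro h
          exact (lob_eq_nd_inter_U ▸ h).2
        · intro h
          rw [lob_eq_nd_inter_U]
          exact ⟨hx, h⟩
      rw [this]
      exact Uset_open.preimage continuous_subtype_val
    have hclosed : IsClosed s := by
      have : s = Subtype.val ⁻¹' Kset n := by
        ext ⟨x, hx⟩
        simp only [hs, Set.mem_preimage]
        constructor
        · intro h
          exact (lob_eq_nd_inter_K ▸ h).2
        · intro h
          rw [lob_eq_nd_inter_K]
          exact ⟨hx, h⟩
      rw [this]
      exact Kset_closed.preimage continuous_subtype_val
    have hsub : connectedComponent (⟨C, hCΩ⟩ : nondegenerateGram n) ⊆ s :=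
      IsClopen.connectedComponent_subset ⟨hclosed, hopen⟩ hC
    calc Subtype.val '' connectedComponent (⟨C, hCΩ⟩ : nondegenerateGram n)
        ⊆ Subtype.val '' s := Set.image_mono hsub
      _ ⊆ lobachevskyGram n := Set.image_preimage_subset _ _
  · exact lob_preconnected.subset_connectedComponentIn hC lob_subset_nd

end

end LGaux

/-- For `n ≥ 1`, the set `𝒞_{Λ^n}` is a nonempty connected
component of `Ω = {C ∈ 𝒢_(n)(ℝ) : D_I(C) ≠ 0 for all |I| ≥ 2}`: it is
nonempty, contained in `Ω`, and equals the connected component in `Ω` of each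
of its points. -/
theorem lobachevsky_gram_connected_component
    (n : ℕ) (hn : 1 ≤ n) :
    (lobachevskyGram n).Nonempty ∧
    lobachevskyGram n ⊆ nondegenerateGram n ∧
    ∀ C ∈ lobachevskyGram n,
      connectedComponentIn (nondegenerateGram n) C = lobachevskyGram n :=
  LGaux.main n hn
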